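/- Let P, Q ⊆ 2^ω be measurable with Q ⊆ P, σ a string, and δ < 1/2 such that for all ρ ⪰ σ with [ρ] ∩ Q ≠ ∅ one has μ_ρ(Q) + δ ≥ μ_ρ(P). Let ε > 0 with ε < min(1/2 − δ, μ_σ(Q)), and let Q^ε_σ = {X ∈ Q ∩ [σ] : ∀ n ≥ |σ|, μ_{X↾n}(Q) ≥ ε}. Then for every τ ⪰ σ with [τ] ∩ Q^ε_σ ≠ ∅, we have μ_τ(Q^ε_σ) + (ε + δ) ≥ μ_τ(P), and ε + δ < 1/2. -/

import Mathlib

open MeasureTheory Filter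
open scoped ENNReal

/-- The cylinder of infinite binary sequences extending the finite string `τ`. -/
def cyl (τ : List Bool) : Set (ℕ → Bool) := {X | ∀ i : Fin τ.length, X i = τ.get i}

/-- Relative measure `μ_τ(P) = μ(P ∩ [τ]) / μ([τ])`. -/
noncomputable def relMeas (μ : Measure (ℕ → Bool)) (τ : List Bool)
    (P : Set (ℕ → Bool)) : ℝ≥0∞ := μ (P ∩ cyl τ) / μ (cyl τ)

/-- The length-`n` prefix of an infinite binary sequence. -/
def pre (X : ℕ → Bool) (n : ℕ) : List Bool := List.ofFn fun i : Fin n => X i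

lemma pre_length (X : ℕ → Bool) (n : ℕ) : (pre X n).length = n := List.length_ofFn

lemma pre_take (X : ℕ → Bool) {m n : ℕ} (h : m ≤ n) : (pre X n).take m = pre X m := by
  apply List.ext_get
  · simp [pre, h]
  · intro i h1 h2
    simp [pre, List.getElem_take']

lemma mem_cyl (X : ℕ → Bool) (τ : List Bool) : X ∈ cyl τ ↔ pre X τ.length = τ := by
  constructor
  · intro h
    apply List.ext_get (by simp [pre])
    intro i h1 h2
    simpa [pre] using (h ⟨i, h2⟩)
  · intro h i
    have h2 : (pre X τ.length)[(i : ℕ)]'(by simp [pre, i.2]) = τ[(i : ℕ)]'i.2 :=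
      List.getElem_of_eq h _
    simpa [pre] using h2

lemma mem_cyl_pre (X : ℕ → Bool) (n : ℕ) : X ∈ cyl (pre X n) := by
  rw [mem_cyl, pre_length]

lemma cyl_anti {ρ ρ' : List Bool} (h : ρ <+: ρ') : cyl ρ' ⊆ cyl ρ := by
  intro X hX
  rw [mem_cyl] at hX ⊢
  rw [← pre_take X h.length_le, hX, ← List.prefix_iff_eq_take.mp h]

lemma prefix_of_mem_cyl {X : ℕ → Bool} {ρ₁ ρ₂ : List Bool} (h1 : X ∈ cyl ρ₁)
    (h2 : X ∈ cyl ρ₂) (hlen : ρ₁.length ≤ ρ₂.length) : ρ₁ <+: ρ₂ := by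
  rw [mem_cyl] at h1 h2
  rw [← h1, ← h2, ← pre_take X hlen]
  exact List.take_prefix _ _

lemma measurable_cyl (τ : List Bool) : MeasurableSet (cyl τ) := by
  have : cyl τ = ⋂ i : Fin τ.length, {X : ℕ → Bool | X i = τ.get i} := by
    ext X; simp [cyl]
  rw [this]
  exact MeasurableSet.iInter fun i =>
    (measurable_pi_apply (i : ℕ)) (MeasurableSet.singleton _)

theorem stmt7 (μ : Measure (ℕ → Bool))
    (hμ : ∀ τ : List Bool, μ (cyl τ) = (2 : ℝ≥0∞)⁻¹ ^ τ.length)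
    (P Q : Set (ℕ → Bool)) (hP : MeasurableSet P) (hQ : MeasurableSet Q)
    (hQP : Q ⊆ P) (σ : List Bool)
    (δ : ℝ≥0∞) (hδ : δ < 1/2)
    (hcond : ∀ ρ : List Bool, σ <+: ρ → (cyl ρ ∩ Q).Nonempty →
      relMeas μ ρ P ≤ relMeas μ ρ Q + δ)
    (ε : ℝ≥0∞) (hε : 0 < ε) (hε₁ : ε < 1/2 - δ) (hε₂ : ε < relMeas μ σ Q)
    (Qes : Set (ℕ → Bool))
    (hQes : Qes = {X ∈ Q ∩ cyl σ | ∀ n ≥ σ.length, ε ≤ relMeas μ (pre X n) Q}) :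
    (∀ τ : List Bool, σ <+: τ → (cyl τ ∩ Qes).Nonempty →
      relMeas μ τ P ≤ relMeas μ τ Qes + (ε + δ)) ∧ ε + δ < 1/2 := by
  classical
  have hcyl0 : ∀ ρ : List Bool, μ (cyl ρ) ≠ 0 := fun ρ => by
    rw [hμ]; exact pow_ne_zero _ (by simp)
  have hcylt : ∀ ρ : List Bool, μ (cyl ρ) ≠ ⊤ := fun ρ => by
    rw [hμ]; exact ENNReal.pow_ne_top (by simp)
  constructor
  · intro τ hστ hne
    obtain ⟨Y, hYτ, hYQes⟩ := hne
    have hYQ : Y ∈ Q := by rw [hQes] at hYQes; exact hYQes.1.1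
    have hYall : ∀ n ≥ σ.length, ε ≤ relMeas μ (pre Y n) Q := by
      rw [hQes] at hYQes; exact hYQes.2
    -- the antichain of minimal "bad" extensions of τ
    set S : Set (List Bool) := {ρ | τ <+: ρ ∧ relMeas μ ρ Q < ε ∧
      ∀ m, τ.length ≤ m → m < ρ.length → ε ≤ relMeas μ (ρ.take m) Q} with hS
    have hScount : S.Countable := S.to_countable
    -- cylinders in S are pairwise disjoint
    have haux : ∀ ρ₁ ∈ S, ∀ ρ₂ ∈ S, ∀ X : ℕ → Bool, X ∈ cyl ρ₁ → X ∈ cyl ρ₂ →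
        ρ₁.length ≤ ρ₂.length → ρ₁ = ρ₂ := by
      intro ρ₁ h1 ρ₂ h2 X hX1 hX2 hlen
      have hpre : ρ₁ <+: ρ₂ := prefix_of_mem_cyl hX1 hX2 hlen
      rcases eq_or_lt_of_le hlen with heq | hlt
      · exact hpre.eq_of_length heq
      · exfalso
        have h3 := h2.2.2 ρ₁.length h1.1.length_le hlt
        rw [← List.prefix_iff_eq_take.mp hpre] at h3
        exact absurd h1.2.1 (not_lt.mpr h3)
    have hdisj : S.PairwiseDisjoint cyl := by
      intro ρ₁ h1 ρ₂ h2 hne12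
      rw [Function.onFun, Set.disjoint_left]
      intro X hX1 hX2
      rcases le_total ρ₁.length ρ₂.length with hle | hle
      · exact hne12 (haux ρ₁ h1 ρ₂ h2 X hX1 hX2 hle)
      · exact hne12 (haux ρ₂ h2 ρ₁ h1 X hX2 hX1 hle).symm
    -- the bad part of Q ∩ [τ] is covered by cylinders in S
    have hcover : (Q ∩ cyl τ) \ Qes ⊆ ⋃ ρ ∈ S, cyl ρ := by
      rintro X ⟨⟨hXQ, hXτ⟩, hXn⟩
      have hXσ : X ∈ cyl σ := cyl_anti hστ hXτ
      rw [hQes, Set.mem_setOf_eq] at hXn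
      push_neg at hXn
      obtain ⟨n, hn1, hn2⟩ := hXn ⟨hXQ, hXσ⟩
      have hex : ∃ n, σ.length ≤ n ∧ relMeas μ (pre X n) Q < ε :=
        ⟨n, hn1, hn2⟩
      set n₀ := Nat.find hex with hn₀
      obtain ⟨hσn₀, hlt⟩ := Nat.find_spec hex
      have hτn₀ : τ.length ≤ n₀ := by
        by_contra hcon
        push_neg at hcon
        have hXY : pre X n₀ = pre Y n₀ := by
          rw [← pre_take X hcon.le, ← pre_take Y hcon.le,
            (mem_cyl X τ).mp hXτ, (mem_cyl Y τ).mp hYτ]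
        exact absurd (hXY ▸ hYall n₀ hσn₀) (not_le.mpr hlt)
      refine Set.mem_biUnion (show pre X n₀ ∈ S from ?_) (mem_cyl_pre X n₀)
      refine ⟨?_, ?_, ?_⟩
      · have htake : (pre X n₀).take τ.length = τ := by
          rw [pre_take X hτn₀, (mem_cyl X τ).mp hXτ]
        exact htake ▸ List.take_prefix _ _
      · exact hlt
      · intro m hm1 hm2
        rw [pre_length] at hm2
        rw [pre_take X hm2.le]
        have := Nat.find_min hex hm2
        push_neg at this
        exact this (hστ.length_le.trans hm1)
    -- measure of the bad part is at most ε·μ([τ])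
    have key1 : μ ((Q ∩ cyl τ) \ Qes) ≤ ε * μ (cyl τ) := by
      calc μ ((Q ∩ cyl τ) \ Qes) ≤ μ (⋃ ρ ∈ S, Q ∩ cyl ρ) := by
            apply measure_mono
            intro X hX
            obtain ⟨ρ, hρ, hXρ⟩ := Set.mem_iUnion₂.mp (hcover hX)
            exact Set.mem_biUnion hρ ⟨hX.1.1, hXρ⟩
        _ ≤ ∑' ρ : S, μ (Q ∩ cyl ρ) := measure_biUnion_le μ hScount _
        _ ≤ ∑' ρ : S, ε * μ (cyl ρ) := by
            apply ENNReal.tsum_le_tsum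
            intro ρ
            have h1 : relMeas μ ρ Q < ε := ρ.2.2.1
            rw [relMeas, ENNReal.div_lt_iff (Or.inl (hcyl0 ρ)) (Or.inl (hcylt ρ))] at h1
            exact h1.le
        _ = ε * ∑' ρ : S, μ (cyl ρ) := ENNReal.tsum_mul_left
        _ = ε * μ (⋃ ρ ∈ S, cyl ρ) := by
            rw [measure_biUnion hScount hdisj (fun ρ _ => measurable_cyl ρ)]
        _ ≤ ε * μ (cyl τ) := by
            apply mul_le_mul_right
            exact measure_mono (Set.iUnion₂_subset fun ρ hρ => cyl_anti hρ.1)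
    have key2 : μ (Q ∩ cyl τ) ≤ μ (Qes ∩ cyl τ) + ε * μ (cyl τ) := by
      calc μ (Q ∩ cyl τ) ≤ μ ((Qes ∩ cyl τ) ∪ ((Q ∩ cyl τ) \ Qes)) := by
            apply measure_mono
            intro X hX
            by_cases h : X ∈ Qes
            · exact Or.inl ⟨h, hX.2⟩
            · exact Or.inr ⟨hX, h⟩
        _ ≤ μ (Qes ∩ cyl τ) + μ ((Q ∩ cyl τ) \ Qes) := measure_union_le _ _
        _ ≤ μ (Qes ∩ cyl τ) + ε * μ (cyl τ) := add_le_add_right key1 _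
    have key3 : relMeas μ τ Q ≤ relMeas μ τ Qes + ε := by
      rw [relMeas, relMeas]
      calc μ (Q ∩ cyl τ) / μ (cyl τ)
          ≤ (μ (Qes ∩ cyl τ) + ε * μ (cyl τ)) / μ (cyl τ) :=
            ENNReal.div_le_div_right key2 _
        _ = μ (Qes ∩ cyl τ) / μ (cyl τ) + ε := by
            rw [ENNReal.add_div, mul_div_assoc,
              ENNReal.div_self (hcyl0 τ) (hcylt τ), mul_one]
    calc relMeas μ τ P ≤ relMeas μ τ Q + δ := hcond τ hστ ⟨Y, hYτ, hYQ⟩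
      _ ≤ (relMeas μ τ Qes + ε) + δ := add_le_add_left key3 δ
      _ = relMeas μ τ Qes + (ε + δ) := add_assoc _ _ _
  · have hδt : δ ≠ ⊤ := (hδ.trans (by norm_num)).ne
    calc ε + δ < (1/2 - δ) + δ := ENNReal.add_lt_add_right hδt hε₁
      _ = 1/2 := tsub_add_cancel_of_le hδ.le
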